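/- Suppose a unitary V and a unitary W on a finite-dimensional Hilbert space satisfy V W = -W V, and suppose both commute with a Hermitian operator H (i.e., V and W are symmetries of H). Then every eigenspace of H has even dimension; in particular no eigenvalue of H is non-degenerate. -/

import Mathlib

open Matrix

noncomputable section

/-- if unitaries `V, W` on a finite-dimensional Hilbert space anticommute,
`VW = -WV`, and both commute with a Hermitian operator `H`, then every eigenspace of `H`
has even dimension; in particular no eigenvalue of `H` is non-degenerate. -/
theorem stmt_3 {n : Type*} [Fintype n] [DecidableEq n]
    (H V W : Matrix n n ℂ) (hH : H.IsHermitian)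
    (hV : V ∈ Matrix.unitaryGroup n ℂ) (hW : W ∈ Matrix.unitaryGroup n ℂ)
    (hVW : V * W = - (W * V)) (hVH : V * H = H * V) (hWH : W * H = H * W) :
    (∀ μ : ℂ, Even (Module.finrank ℂ (Module.End.eigenspace (Matrix.toLin' H) μ))) ∧
    ∀ μ : ℂ, Module.End.HasEigenvalue (Matrix.toLin' H) μ →
      Module.finrank ℂ (Module.End.eigenspace (Matrix.toLin' H) μ) ≠ 1 := by
  have key : ∀ μ : ℂ, Even (Module.finrank ℂ
      (Module.End.eigenspace (Matrix.toLin' H) μ)) := by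
    intro μ
    set f := Matrix.toLin' H with hf
    set v := Matrix.toLin' V with hvdef
    set w := Matrix.toLin' W with hwdef
    set E := Module.End.eigenspace f μ with hE
    -- injectivity of v and w
    have hvinj : Function.Injective v := by
      have h1 : star V * V = 1 := hV.1
      have : Matrix.toLin' (star V) ∘ₗ v = LinearMap.id := by
        rw [hvdef, ← Matrix.toLin'_mul, h1, Matrix.toLin'_one]
      intro x y hxy
      have h2 := LinearMap.congr_fun this x
      have h3 := LinearMap.congr_fun this y
      simp only [LinearMap.comp_apply, LinearMap.id_apply] at h2 h3
      rw [← h2, ← h3, hxy]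
    have hwinj : Function.Injective w := by
      have h1 : star W * W = 1 := hW.1
      have : Matrix.toLin' (star W) ∘ₗ w = LinearMap.id := by
        rw [hwdef, ← Matrix.toLin'_mul, h1, Matrix.toLin'_one]
      intro x y hxy
      have h2 := LinearMap.congr_fun this x
      have h3 := LinearMap.congr_fun this y
      simp only [LinearMap.comp_apply, LinearMap.id_apply] at h2 h3
      rw [← h2, ← h3, hxy]
    -- invariance of the eigenspace
    have hinv : ∀ (A : Matrix n n ℂ), A * H = H * A →
        ∀ x ∈ E, Matrix.toLin' A x ∈ E := by
      intro A hA x hx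
      rw [hE, Module.End.mem_eigenspace_iff] at hx ⊢
      have : f (Matrix.toLin' A x) = Matrix.toLin' A (f x) := by
        have h2 : Matrix.toLin' (H * A) = f ∘ₗ Matrix.toLin' A := by
          rw [hf, Matrix.toLin'_mul]
        have h3 : Matrix.toLin' (A * H) = Matrix.toLin' A ∘ₗ f := by
          rw [hf, Matrix.toLin'_mul]
        have := congrArg Matrix.toLin' hA
        rw [h2, h3] at this
        exact (LinearMap.congr_fun this.symm x)
      rw [this, hx, LinearMap.map_smul]
    have hvE : ∀ x ∈ E, v x ∈ E := hinv V hVH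
    have hwE : ∀ x ∈ E, w x ∈ E := hinv W hWH
    set V' : E →ₗ[ℂ] E := v.restrict hvE with hV'
    set W' : E →ₗ[ℂ] E := w.restrict hwE with hW'
    -- anticommutation for restrictions
    have hanti : V' ∘ₗ W' = -(W' ∘ₗ V') := by
      apply LinearMap.ext; intro x
      apply Subtype.ext
      show v (w (x : n → ℂ)) = -(w (v (x : n → ℂ)))
      have : Matrix.toLin' (V * W) = Matrix.toLin' (-(W * V)) := by rw [hVW]
      rw [Matrix.toLin'_mul, map_neg, Matrix.toLin'_mul] at this
      have h := LinearMap.congr_fun this (x : n → ℂ)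
      simp only [LinearMap.comp_apply, LinearMap.neg_apply] at h
      exact h
    -- determinants are nonzero
    have hdet : ∀ (A : E →ₗ[ℂ] E), Function.Injective A → LinearMap.det A ≠ 0 := by
      intro A hA
      have hsurj : Function.Surjective A := (LinearMap.injective_iff_surjective).mp hA
      have : IsUnit (LinearMap.det (LinearEquiv.ofBijective A ⟨hA, hsurj⟩ :
          E →ₗ[ℂ] E)) := LinearEquiv.isUnit_det' _
      simpa [show ((LinearEquiv.ofBijective A ⟨hA, hsurj⟩ : E ≃ₗ[ℂ] E) : E →ₗ[ℂ] E) = A from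
        LinearMap.ext fun x => LinearEquiv.ofBijective_apply _ _] using this.ne_zero
    have hV'inj : Function.Injective V' := by
      intro x y hxy
      apply Subtype.ext
      apply hvinj
      exact congrArg Subtype.val hxy
    have hW'inj : Function.Injective W' := by
      intro x y hxy
      apply Subtype.ext
      apply hwinj
      exact congrArg Subtype.val hxy
    have hdV : LinearMap.det V' ≠ 0 := hdet V' hV'inj
    have hdW : LinearMap.det W' ≠ 0 := hdet W' hW'inj
    -- take determinants of the anticommutation relation
    have hdeteq : LinearMap.det V' * LinearMap.det W' =
        (-1 : ℂ) ^ (Module.finrank ℂ E) * (LinearMap.det W' * LinearMap.det V') := by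
      have h1 : LinearMap.det (V' ∘ₗ W') = LinearMap.det V' * LinearMap.det W' :=
        LinearMap.det_comp _ _
      have h2 : LinearMap.det (-(W' ∘ₗ V')) =
          (-1 : ℂ) ^ (Module.finrank ℂ E) * LinearMap.det (W' ∘ₗ V') := by
        rw [← neg_one_smul ℂ (W' ∘ₗ V'), LinearMap.det_smul]
      rw [← h1, hanti, h2, LinearMap.det_comp]
    have hpow : ((-1 : ℂ)) ^ (Module.finrank ℂ E) = 1 := by
      have hne : LinearMap.det W' * LinearMap.det V' ≠ 0 := mul_ne_zero hdW hdV
      have h' : (-1 : ℂ) ^ (Module.finrank ℂ E) * (LinearMap.det W' * LinearMap.det V')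
          = 1 * (LinearMap.det W' * LinearMap.det V') := by
        rw [one_mul, ← hdeteq, mul_comm]
      exact mul_right_cancel₀ hne h'
    exact (neg_one_pow_eq_one_iff_even (by norm_num : (-1 : ℂ) ≠ 1)).mp hpow
  refine ⟨key, fun μ _ h1 => ?_⟩
  have := key μ
  rw [h1] at this
  exact (Nat.not_even_one) this
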